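/- For every l ≥ 1, if an (l+2)-UM-critical tree has exactly one vertex v of degree at least 3, then it contains a simple path on 2^l vertices one of whose endpoints is v. -/

import Mathlib

open scoped Classical

noncomputable section

/-- A conflict-free coloring of a hyperedge set `E` with `k` colors: every hyperedge
has some color occurring on exactly one of its vertices. -/
def IsCFColoring {V : Type} {k : ℕ} (E : Set (Finset V)) (C : V → Fin k) : Prop :=
  ∀ e ∈ E, ∃ c : Fin k, (e.filter fun v => C v = c).card = 1

/-- A unique-maximum coloring of a hyperedge set `E` with `k` colors: every hyperedge
has exactly one vertex whose color is maximum on the hyperedge. -/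
def IsUMColoring {V : Type} {k : ℕ} (E : Set (Finset V)) (C : V → Fin k) : Prop :=
  ∀ e ∈ E, ∃! v, v ∈ e ∧ ∀ u ∈ e, C u ≤ C v

/-- An odd coloring of a hyperedge set `E` with `k` colors: every hyperedge
has some color occurring on an odd number of its vertices. -/
def IsOddColoring {V : Type} {k : ℕ} (E : Set (Finset V)) (C : V → Fin k) : Prop :=
  ∀ e ∈ E, ∃ c : Fin k, Odd ((e.filter fun v => C v = c).card)

/-- The conflict-free chromatic number of a hypergraph. -/
def cfNum {V : Type} (E : Set (Finset V)) : ℕ :=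
  sInf {k | ∃ C : V → Fin k, IsCFColoring E C}

/-- The unique-maximum chromatic number of a hypergraph. -/
def umNum {V : Type} (E : Set (Finset V)) : ℕ :=
  sInf {k | ∃ C : V → Fin k, IsUMColoring E C}

/-- The odd chromatic number of a hypergraph. -/
def oddNum {V : Type} (E : Set (Finset V)) : ℕ :=
  sInf {k | ∃ C : V → Fin k, IsOddColoring E C}

/-- The hyperedges of the path hypergraph of a graph `G`: vertex sets of simple paths. -/
def pathEdges {V : Type} (G : SimpleGraph V) : Set (Finset V) :=
  {S | ∃ (u v : V) (p : G.Walk u v), p.IsPath ∧ S = p.support.toFinset}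

/-- Unique-maximum chromatic number of a graph with respect to paths. -/
def UM {V : Type} (G : SimpleGraph V) : ℕ := umNum (pathEdges G)

/-- Conflict-free chromatic number of a graph with respect to paths. -/
def CF {V : Type} (G : SimpleGraph V) : ℕ := cfNum (pathEdges G)

/-- Odd chromatic number of a graph with respect to paths. -/
def ODD {V : Type} (G : SimpleGraph V) : ℕ := oddNum (pathEdges G)

/-- The complete binary tree with `d` levels (`2^d - 1` vertices), with vertices the
binary strings of length `< d`; each vertex `l` is adjacent to its children `b :: l`. -/
def binaryTree (d : ℕ) : SimpleGraph {l : List Bool // l.length < d} :=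
  SimpleGraph.fromRel fun a b => ∃ bit : Bool, b.1 = bit :: a.1

/-- `IsSubdivPaths G H f P` : the data `f` (branch vertices) and `P` (a path of `H` for
every edge of `G`) witness that `H` contains a subdivision of `G` as a subgraph:
`f` is injective, the paths are internally disjoint from each other and from the
branch vertices. -/
def IsSubdivPaths {V W : Type} (G : SimpleGraph V) (H : SimpleGraph W) (f : V → W)
    (P : ∀ u v, G.Adj u v → H.Walk (f u) (f v)) : Prop :=
  Function.Injective f ∧
  (∀ u v (h : G.Adj u v), (P u v h).IsPath) ∧
  (∀ u v (h : G.Adj u v), P v u h.symm = (P u v h).reverse) ∧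
  (∀ u v (h : G.Adj u v) (w : W),
    w ∈ (P u v h).support → w ≠ f u → w ≠ f v → w ∉ Set.range f) ∧
  (∀ u v (h : G.Adj u v) (u' v' : V) (h' : G.Adj u' v'), s(u, v) ≠ s(u', v') →
    ∀ w : W, w ∈ (P u v h).support → w ∈ (P u' v' h').support → w ∈ Set.range f)

/-- `H` contains a subdivision of `G` as a subgraph. -/
def ContainsSubdivision {V W : Type} (G : SimpleGraph V) (H : SimpleGraph W) : Prop :=
  ∃ f P, IsSubdivPaths G H f P

/-- `IsSubdivision G H f P` : the data `f`, `P` witness that `H` is (exactly) a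
subdivision of `G`: additionally to `IsSubdivPaths`, every vertex of `H` and every
edge of `H` comes from some path replacing an edge of `G`, or is a branch vertex. -/
def IsSubdivision {V W : Type} (G : SimpleGraph V) (H : SimpleGraph W) (f : V → W)
    (P : ∀ u v, G.Adj u v → H.Walk (f u) (f v)) : Prop :=
  IsSubdivPaths G H f P ∧
  (∀ w : W, w ∈ Set.range f ∨ ∃ u v h, w ∈ (P u v h).support) ∧
  (∀ a b : W, H.Adj a b ↔ ∃ u v h, s(a, b) ∈ (P u v h).edges)

/-- `H` is a subdivision of `G`. -/
def Subdivides {V W : Type} (G : SimpleGraph V) (H : SimpleGraph W) : Prop :=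
  ∃ f P, IsSubdivision G H f P

/-- A graph is UM-critical if every proper subgraph has strictly smaller
unique-maximum chromatic number with respect to paths. -/
def UMCritical {V : Type} (G : SimpleGraph V) : Prop :=
  ∀ G' : G.Subgraph, G' ≠ ⊤ → UM G'.coe < UM G

/-- A graph is `k`-UM-critical if it is UM-critical and its UM number equals `k`. -/
def UMCriticalK {V : Type} (k : ℕ) (G : SimpleGraph V) : Prop :=
  UMCritical G ∧ UM G = k

/-- A family of sequences of distinct elements of `Fin n` is prefix set-free if no
nonempty prefix of a member (including the member itself) has the same underlying set
as another member. -/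
def IsPSF {n : ℕ} (F : Finset (List (Fin n))) : Prop :=
  (∀ l ∈ F, l.Nodup) ∧
  ∀ A ∈ F, ∀ B ∈ F, A ≠ B →
    ∀ p : List (Fin n), p ≠ [] → p <+: A → p.toFinset ≠ B.toFinset

/-- A `[k,d,n]` prefix set-free family: ground set `Fin n`, every sequence of length at
least `k`, and at least `2^d` members. -/
def IsPSFFamily (k d n : ℕ) (F : Finset (List (Fin n))) : Prop :=
  IsPSF F ∧ (∀ l ∈ F, k ≤ l.length) ∧ 2 ^ d ≤ F.card

open SimpleGraph Walk

section Aux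
variable {V : Type} [Fintype V] {T : SimpleGraph V}

private lemma v2_lt {d l : ℕ} (hd : 1 ≤ d) (hdl : d < 2 ^ l) : padicValNat 2 d < l := by
  have h1 : 2 ^ padicValNat 2 d ∣ d := pow_padicValNat_dvd
  have h2 : 2 ^ padicValNat 2 d ≤ d := Nat.le_of_dvd (by omega) h1
  by_contra hc
  push_neg at hc
  have : 2 ^ l ≤ 2 ^ padicValNat 2 d := Nat.pow_le_pow_right (by norm_num) hc
  omega

private lemma no_two_max {a b p q M : ℕ} (hp : p ∈ Finset.Icc a b) (hq : q ∈ Finset.Icc a b)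
    (hpq : p < q) (hap : 1 ≤ a) (hvp : padicValNat 2 p = M) (hvq : padicValNat 2 q = M)
    (hmax : ∀ z ∈ Finset.Icc a b, padicValNat 2 z ≤ M) : False := by
  haveI : Fact (Nat.Prime 2) := ⟨Nat.prime_two⟩
  rw [Finset.mem_Icc] at hp hq
  have hp0 : p ≠ 0 := by omega
  have hnp : ¬ (2:ℕ) ^ (M+1) ∣ p := hvp ▸ pow_succ_padicValNat_not_dvd hp0
  obtain ⟨s, rfl⟩ : (2:ℕ) ^ M ∣ p := hvp ▸ pow_padicValNat_dvd
  obtain ⟨t, rfl⟩ : (2:ℕ) ^ M ∣ q := hvq ▸ pow_padicValNat_dvd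
  have hM0 : 0 < (2:ℕ) ^ M := Nat.pow_pos (by norm_num)
  have hs2 : s % 2 = 1 := by
    rcases Nat.mod_two_eq_zero_or_one s with h | h
    · exfalso; apply hnp
      obtain ⟨m, rfl⟩ : 2 ∣ s := Nat.dvd_of_mod_eq_zero h
      exact ⟨m, by ring⟩
    · exact h
  have hst : s < t := by
    by_contra hts
    push_neg at hts
    have := Nat.mul_le_mul_left (2 ^ M) hts
    omega
  have hz_mem : 2 ^ M * (s + 1) ∈ Finset.Icc a b := by
    rw [Finset.mem_Icc]
    have h1 : 2 ^ M * s ≤ 2 ^ M * (s + 1) := Nat.mul_le_mul_left _ (by omega)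
    have h2 : 2 ^ M * (s + 1) ≤ 2 ^ M * t := Nat.mul_le_mul_left _ (by omega)
    omega
  have hz0 : 2 ^ M * (s + 1) ≠ 0 := by positivity
  have hdvd : (2:ℕ) ^ (M+1) ∣ 2 ^ M * (s + 1) := by
    obtain ⟨m, hm⟩ : 2 ∣ s + 1 := by omega
    exact ⟨m, by rw [hm]; ring⟩
  have hle : M + 1 ≤ padicValNat 2 (2 ^ M * (s + 1)) :=
    (padicValNat_dvd_iff_le hz0).mp hdvd
  have := hmax _ hz_mem
  omega

private lemma exists_unique_max_v2 {a b : ℕ} (ha : 1 ≤ a) (hab : a ≤ b) :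
    ∃! x, x ∈ Finset.Icc a b ∧ ∀ y ∈ Finset.Icc a b, padicValNat 2 y ≤ padicValNat 2 x := by
  obtain ⟨x, hx, hmax⟩ := Finset.exists_max_image (Finset.Icc a b) (padicValNat 2)
    ⟨a, Finset.mem_Icc.mpr ⟨le_refl a, hab⟩⟩
  refine ⟨x, ⟨hx, hmax⟩, ?_⟩
  rintro y ⟨hy, hymax⟩
  by_contra hne
  have hvxy : padicValNat 2 y = padicValNat 2 x := le_antisymm (hmax y hy) (hymax x hx)
  rcases lt_or_gt_of_ne hne with h | h
  · exact no_two_max hy hx h ha hvxy rfl hmax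
  · exact no_two_max hx hy h ha rfl hvxy hmax

end Aux


section TreeAux
variable {V : Type} [Fintype V] {T : SimpleGraph V}

/-- In a tree, adjacent vertices have distances to `v` differing by exactly one. -/
private lemma adj_dist_cases (hT : T.IsTree) (v : V) {a b : V} (hab : T.Adj a b) :
    T.dist b v = T.dist a v + 1 ∨ T.dist a v = T.dist b v + 1 := by
  have hconn := hT.isConnected
  have tri1 : T.dist b v ≤ T.dist a v + 1 := by
    have := hconn.dist_triangle (u := b) (v := a) (w := v)
    have h1 : T.dist b a = 1 := dist_eq_one_iff_adj.mpr hab.symm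
    omega
  have tri2 : T.dist a v ≤ T.dist b v + 1 := by
    have := hconn.dist_triangle (u := a) (v := b) (w := v)
    have h1 : T.dist a b = 1 := dist_eq_one_iff_adj.mpr hab
    omega
  by_contra hc
  push_neg at hc
  have heq : T.dist a v = T.dist b v := by omega
  set d := T.dist a v with hd
  have hd1 : 1 ≤ d := by
    rcases Nat.eq_zero_or_pos d with h0 | h0
    · exfalso
      have hav : a = v := hconn.dist_eq_zero_iff.mp (hd ▸ h0)
      have hbv : b = v := hconn.dist_eq_zero_iff.mp (by omega)
      exact hab.ne (hav.trans hbv.symm)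
    · exact h0
  obtain ⟨pa, hpa, hpalen⟩ := hconn.exists_path_of_dist a v
  obtain ⟨pb, hpb, hpblen⟩ := hconn.exists_path_of_dist b v
  by_cases hmem : a ∈ pb.support
  · have hq := dist_le (pb.dropUntil a hmem)
    have hspec := congrArg Walk.length (pb.take_spec hmem)
    rw [length_append] at hspec
    have htake : (pb.takeUntil a hmem).length ≠ 0 := by
      intro h0
      exact hab.ne (eq_of_length_eq_zero h0).symm
    omega
  · have hw : (Walk.cons hab pb).IsPath := hpb.cons hmem
    have := (hT.existsUnique_path a v).unique hw hpa
    have hlen := congrArg Walk.length this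
    rw [length_cons] at hlen
    omega

end TreeAux

section TreeAux2
set_option linter.unusedSectionVars false
variable {V : Type} [Fintype V] {T : SimpleGraph V}

/-- In a tree, a vertex has a unique neighbor closer to `v`. -/
private lemma unique_parent (hT : T.IsTree) (v : V) {b x y : V}
    (hbx : T.Adj b x) (hby : T.Adj b y)
    (hx : T.dist x v + 1 = T.dist b v) (hy : T.dist y v + 1 = T.dist b v) : x = y := by
  have hconn := hT.isConnected
  obtain ⟨px, hpx, hpxlen⟩ := hconn.exists_path_of_dist x v
  obtain ⟨py, hpy, hpylen⟩ := hconn.exists_path_of_dist y v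
  have hbnx : b ∉ px.support := by
    intro hmem
    have hq := dist_le (px.dropUntil b hmem)
    have hspec := congrArg Walk.length (px.take_spec hmem)
    rw [length_append] at hspec
    omega
  have hbny : b ∉ py.support := by
    intro hmem
    have hq := dist_le (py.dropUntil b hmem)
    have hspec := congrArg Walk.length (py.take_spec hmem)
    rw [length_append] at hspec
    omega
  have hwx : (Walk.cons hbx px).IsPath := hpx.cons hbnx
  have hwy : (Walk.cons hby py).IsPath := hpy.cons hbny
  have heq := (hT.existsUnique_path b v).unique hwx hwy
  have hsup := congrArg Walk.support heq
  rw [support_cons, support_cons, px.support_eq_cons, py.support_eq_cons] at hsup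
  injection hsup with h1 h2
  injection h2 with h3 h4

/-- A vertex distinct from `v` has a neighbor strictly closer to `v`. -/
private lemma parent_exists (hT : T.IsTree) (v : V) {b : V} (hbv : b ≠ v) :
    ∃ x, T.Adj b x ∧ T.dist x v + 1 = T.dist b v := by
  have hconn := hT.isConnected
  have hd1 : 0 < T.dist b v := hconn.pos_dist_of_ne hbv
  obtain ⟨p, hp, hplen⟩ := hconn.exists_path_of_dist b v
  cases p with
  | nil => exact absurd rfl hbv
  | @cons _ x _ h q =>
    refine ⟨x, h, ?_⟩
    have h1 : T.dist x v ≤ q.length := dist_le q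
    have h2 : T.dist b v ≤ T.dist x v + 1 := by
      have := hconn.dist_triangle (u := b) (v := x) (w := v)
      have h1 : T.dist b x = 1 := dist_eq_one_iff_adj.mpr h
      omega
    rw [length_cons] at hplen
    omega

end TreeAux2

section Chain
set_option linter.unusedSectionVars false
variable {V : Type} [Fintype V] {T : SimpleGraph V}

/-- Along a path avoiding `v` in a tree whose only vertex of degree ≥ 3 is `v`,
the distance to `v` is strictly monotone. -/
private lemma dist_chain (hT : T.IsTree) (v : V) (huniq : ∀ w, 3 ≤ T.degree w → w = v)
    {a b : V} (p : T.Walk a b) :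
    p.IsPath → v ∉ p.support →
    (∀ i, i < p.length → T.dist (p.getVert (i+1)) v = T.dist (p.getVert i) v + 1) ∨
    (∀ i, i < p.length → T.dist (p.getVert i) v = T.dist (p.getVert (i+1)) v + 1) := by
  have hconn := hT.isConnected
  induction p with
  | nil => intro _ _; left; intro i hi; simp at hi
  | @cons a b' c h q ih =>
    intro hp hv
    have hq : q.IsPath := hp.of_cons
    have hanq : a ∉ q.support := ((cons_isPath_iff h q).mp hp).2
    have hv' : v ∉ q.support := fun hmem => hv (by rw [support_cons]; exact List.mem_cons_of_mem _ hmem)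
    have hva : v ≠ a := fun hva => hv (by rw [support_cons, hva]; exact List.mem_cons_self)
    have hvb' : b' ≠ v := fun hb => hv' (hb ▸ q.start_mem_support)
    rcases adj_dist_cases hT v h with hup | hdown
    · -- dist b' v = dist a v + 1
      rcases ih hq hv' with hinc | hdec
      · left
        intro i hi
        cases i with
        | zero => simpa using hup
        | succ j =>
          rw [length_cons] at hi
          exact hinc j (by omega)
      · by_cases hq0 : q.length = 0
        · left
          intro i hi
          rw [length_cons, hq0] at hi
          interval_cases i
          simpa using hup
        · exfalso
          have h0 : 0 < q.length := Nat.pos_of_ne_zero hq0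
          have hc0 : T.dist (q.getVert 1) v + 1 = T.dist b' v := by
            have := hdec 0 h0
            rw [getVert_zero] at this
            simpa using this.symm
          have hadj_bc : T.Adj b' (q.getVert 1) := by
            have := q.adj_getVert_succ (i := 0) h0
            rw [getVert_zero] at this
            simpa using this
          have hac : a = q.getVert 1 :=
            unique_parent hT v h.symm hadj_bc (by omega) hc0
          exact hanq (hac ▸ mem_support_iff_exists_getVert.mpr ⟨1, rfl, by omega⟩)
    · -- dist a v = dist b' v + 1
      rcases ih hq hv' with hinc | hdec
      · by_cases hq0 : q.length = 0
        · right
          intro i hi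
          rw [length_cons, hq0] at hi
          interval_cases i
          simpa using hdown
        · exfalso
          have h0 : 0 < q.length := Nat.pos_of_ne_zero hq0
          have hc0 : T.dist (q.getVert 1) v = T.dist b' v + 1 := by
            have := hinc 0 h0
            rw [getVert_zero] at this
            simpa using this
          have hadj_bc : T.Adj b' (q.getVert 1) := by
            have := q.adj_getVert_succ (i := 0) h0
            rw [getVert_zero] at this
            simpa using this
          obtain ⟨x, hbx, hx⟩ := parent_exists hT v hvb'
          have hcmem : q.getVert 1 ∈ q.support := mem_support_iff_exists_getVert.mpr ⟨1, rfl, by omega⟩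
          have hxa : x ≠ a := fun hxa => by rw [hxa] at hx; omega
          have hxc : x ≠ q.getVert 1 := fun hxc => by rw [hxc] at hx; omega
          have hac : a ≠ q.getVert 1 := fun hac => hanq (hac ▸ hcmem)
          have hsub : ({a, q.getVert 1, x} : Finset V) ⊆ T.neighborFinset b' := by
            intro z hz
            simp only [Finset.mem_insert, Finset.mem_singleton] at hz
            rw [mem_neighborFinset]
            rcases hz with rfl | rfl | rfl
            · exact h.symm
            · exact hadj_bc
            · exact hbx
          have hcard : ({a, q.getVert 1, x} : Finset V).card = 3 := by
            rw [Finset.card_insert_of_notMem (by simp [hac, Ne.symm hxa]),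
              Finset.card_insert_of_notMem (by simp [Ne.symm hxc]),
              Finset.card_singleton]
          have hdeg : 3 ≤ T.degree b' := by
            rw [← card_neighborFinset_eq_degree]
            calc 3 = ({a, q.getVert 1, x} : Finset V).card := hcard.symm
            _ ≤ _ := Finset.card_le_card hsub
          exact hvb' (huniq b' hdeg)
      · right
        intro i hi
        cases i with
        | zero => simpa using hdown
        | succ j =>
          rw [length_cons] at hi
          exact hdec j (by omega)

end Chain

noncomputable section UMColoring
set_option linter.unusedSectionVars false

/-- The unique-maximum coloring used in the proof: `v` gets the top color, every other
vertex the 2-adic valuation of its distance to `v` (truncated). -/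
def umC {V : Type} (T : SimpleGraph V) (v : V) (l : ℕ) (u : V) : Fin (l + 1) :=
  if u = v then Fin.last l
  else ⟨min (padicValNat 2 (T.dist u v)) (l - 1), by
    have := min_le_right (padicValNat 2 (T.dist u v)) (l - 1); omega⟩

variable {V : Type} [Fintype V] {T : SimpleGraph V}

private lemma umC_val {v : V} {l : ℕ} (hl : 1 ≤ l)
    (hd : ∀ u : V, u ≠ v → 1 ≤ T.dist u v ∧ T.dist u v < 2 ^ l)
    {u : V} (hu : u ≠ v) : (umC T v l u).val = padicValNat 2 (T.dist u v) := by
  obtain ⟨h1, h2⟩ := hd u hu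
  have hlt : padicValNat 2 (T.dist u v) < l := v2_lt h1 h2
  rw [umC, if_neg hu]
  exact min_eq_left (by omega)

private lemma um_edge {v : V} {l : ℕ} (hl : 1 ≤ l)
    (hd : ∀ u : V, u ≠ v → 1 ≤ T.dist u v ∧ T.dist u v < 2 ^ l)
    (e : Finset V) (n d0 : ℕ) (g : ℕ → V)
    (hmem : ∀ w, w ∈ e ↔ ∃ i ≤ n, g i = w)
    (hgd : ∀ i ≤ n, T.dist (g i) v = d0 + i)
    (hne : ∀ i ≤ n, g i ≠ v) :
    ∃! w, w ∈ e ∧ ∀ u ∈ e, umC T v l u ≤ umC T v l w := by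
  have hd0 : 1 ≤ d0 := by
    have h1 := hgd 0 (Nat.zero_le n)
    have h2 := (hd (g 0) (hne 0 (Nat.zero_le n))).1
    omega
  have hC : ∀ i ≤ n, (umC T v l (g i)).val = padicValNat 2 (d0 + i) := by
    intro i hi
    rw [umC_val hl hd (hne i hi), hgd i hi]
  obtain ⟨m, ⟨hm, hmax⟩, huni⟩ := exists_unique_max_v2 (a := d0) (b := d0 + n) hd0 (by omega)
  rw [Finset.mem_Icc] at hm
  obtain ⟨j, hjn, rfl⟩ : ∃ j ≤ n, d0 + j = m := ⟨m - d0, by omega, by omega⟩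
  have hjmem : g j ∈ e := (hmem _).mpr ⟨j, hjn, rfl⟩
  refine ⟨g j, ⟨hjmem, ?_⟩, ?_⟩
  · intro u hu
    obtain ⟨i, hi, rfl⟩ := (hmem u).mp hu
    rw [Fin.le_def, hC i hi, hC j hjn]
    exact hmax (d0 + i) (Finset.mem_Icc.mpr (by omega))
  · rintro w ⟨hw, hwmax⟩
    obtain ⟨i, hi, rfl⟩ := (hmem w).mp hw
    have h1 : (umC T v l (g j)).val ≤ (umC T v l (g i)).val :=
      Fin.le_def.mp (hwmax (g j) hjmem)
    rw [hC i hi, hC j hjn] at h1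
    have h2 : padicValNat 2 (d0 + i) ≤ padicValNat 2 (d0 + j) :=
      hmax (d0 + i) (Finset.mem_Icc.mpr (by omega))
    have heqv : padicValNat 2 (d0 + i) = padicValNat 2 (d0 + j) := le_antisymm h2 h1
    have : d0 + i = d0 + j := huni (d0 + i) ⟨Finset.mem_Icc.mpr (by omega),
      fun y hy => (hmax y hy).trans_eq heqv.symm⟩
    have : i = j := by omega
    rw [this]

private lemma dist_linear_incr {v : V} {a b : V} (p : T.Walk a b)
    (h : ∀ i, i < p.length → T.dist (p.getVert (i+1)) v = T.dist (p.getVert i) v + 1) :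
    ∀ i, i ≤ p.length → T.dist (p.getVert i) v = T.dist a v + i := by
  intro i
  induction i with
  | zero => intro _; rw [getVert_zero]; omega
  | succ j ihj => intro hj; rw [h j (by omega), ihj (by omega)]; omega

private lemma dist_linear_decr {v : V} {a b : V} (p : T.Walk a b)
    (h : ∀ i, i < p.length → T.dist (p.getVert i) v = T.dist (p.getVert (i+1)) v + 1) :
    ∀ j, j ≤ p.length → T.dist (p.getVert (p.length - j)) v = T.dist b v + j := by
  intro j
  induction j with
  | zero => intro _; rw [Nat.sub_zero, getVert_length]; omega
  | succ j ihj =>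
    intro hj
    have hlt : p.length - (j + 1) < p.length := by omega
    have := h (p.length - (j + 1)) hlt
    have harith : p.length - (j + 1) + 1 = p.length - j := by omega
    rw [harith] at this
    rw [this, ihj (by omega)]; omega

private lemma peel {v : V} {u : V} (p : T.Walk u v) :
    p.IsPath → ∀ n, n ≤ p.length → ∃ (w : V) (q : T.Walk w v), q.IsPath ∧ q.length = n := by
  induction p with
  | nil =>
    intro _ n hn
    simp only [length_nil, Nat.le_zero] at hn
    exact ⟨_, Walk.nil, IsPath.nil, by simp [hn]⟩
  | @cons a b c h q ih =>
    intro hp n hn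
    rw [length_cons] at hn
    by_cases hq : n ≤ q.length
    · exact ih hp.of_cons n hq
    · exact ⟨a, Walk.cons h q, hp, by rw [length_cons]; omega⟩

end UMColoring

theorem stmt11' {V : Type} [Fintype V] (l : ℕ) (hl : 1 ≤ l)
    (T : SimpleGraph V) (hT : T.IsTree) (hcrit : UMCriticalK (l + 2) T)
    (v : V) (hv : 3 ≤ T.degree v) (huniq : ∀ w, 3 ≤ T.degree w → w = v) :
    ∃ (u : V) (p : T.Walk u v), p.IsPath ∧ p.support.length = 2 ^ l := by
  classical
  have hconn := hT.isConnected
  have hpow : 1 ≤ 2 ^ l := Nat.one_le_two_pow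
  by_cases hbig : ∃ u : V, 2 ^ l - 1 ≤ T.dist u v
  · obtain ⟨u, hu⟩ := hbig
    obtain ⟨p, hp, hlen⟩ := hconn.exists_path_of_dist u v
    obtain ⟨w, q, hq, hqlen⟩ := peel p hp (2 ^ l - 1) (by omega)
    refine ⟨w, q, hq, ?_⟩
    rw [SimpleGraph.Walk.length_support, hqlen]
    omega
  · push_neg at hbig
    exfalso
    have hd : ∀ u : V, u ≠ v → 1 ≤ T.dist u v ∧ T.dist u v < 2 ^ l := by
      intro u hu
      have h1 := hconn.pos_dist_of_ne hu
      have h2 := hbig u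
      omega
    have hC : IsUMColoring (pathEdges T) (umC T v l) := by
      rintro e ⟨x, y, p, hp, rfl⟩
      by_cases hvs : v ∈ p.support
      · refine ⟨v, ⟨List.mem_toFinset.mpr hvs, fun u _ => ?_⟩, ?_⟩
        · have hlast : umC T v l v = Fin.last l := if_pos rfl
          rw [hlast]; exact Fin.le_last _
        · rintro w ⟨hw, hwmax⟩
          by_contra hwv
          have h1 := hwmax v (List.mem_toFinset.mpr hvs)
          have h2 : umC T v l v = Fin.last l := if_pos rfl
          rw [h2, Fin.le_def] at h1
          have h3 : (umC T v l w).val ≤ l - 1 := by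
            rw [umC, if_neg hwv]
            exact min_le_right _ _
          have h4 : (Fin.last l).val = l := rfl
          omega
      · rcases dist_chain hT v huniq p hp hvs with hinc | hdec
        · refine um_edge hl hd _ p.length (T.dist x v) (fun i => p.getVert i) ?_
            (dist_linear_incr (v := v) p hinc) ?_
          · intro w
            rw [List.mem_toFinset, SimpleGraph.Walk.mem_support_iff_exists_getVert]
            constructor
            · rintro ⟨i, h1, h2⟩; exact ⟨i, h2, h1⟩
            · rintro ⟨i, h1, h2⟩; exact ⟨i, h2, h1⟩
          · intro i hi hgv
            exact hvs (hgv ▸ SimpleGraph.Walk.mem_support_iff_exists_getVert.mpr ⟨i, rfl, hi⟩)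
        · refine um_edge hl hd _ p.length (T.dist y v) (fun i => p.getVert (p.length - i)) ?_
            (dist_linear_decr (v := v) p hdec) ?_
          · intro w
            rw [List.mem_toFinset, SimpleGraph.Walk.mem_support_iff_exists_getVert]
            constructor
            · rintro ⟨i, h1, h2⟩
              exact ⟨p.length - i, by omega, by
                show p.getVert (p.length - (p.length - i)) = w
                rw [Nat.sub_sub_self h2]; exact h1⟩
            · rintro ⟨i, h1, h2⟩
              exact ⟨p.length - i, h2, by omega⟩
          · intro i hi hgv
            exact hvs (hgv ▸ SimpleGraph.Walk.mem_support_iff_exists_getVert.mpr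
              ⟨p.length - i, rfl, by omega⟩)
    have hmem2 : (l + 1) ∈ {k | ∃ C : V → Fin k, IsUMColoring (pathEdges T) C} :=
      ⟨umC T v l, hC⟩
    have hle := Nat.sInf_le hmem2
    have h2 : UM T = l + 2 := hcrit.2
    unfold UM umNum at h2
    omega

theorem stmt11 {V : Type} [Fintype V] (l : ℕ) (hl : 1 ≤ l)
    (T : SimpleGraph V) (hT : T.IsTree) (hcrit : UMCriticalK (l + 2) T)
    (v : V) (hv : 3 ≤ T.degree v) (huniq : ∀ w, 3 ≤ T.degree w → w = v) :
    ∃ (u : V) (p : T.Walk u v), p.IsPath ∧ p.support.length = 2 ^ l := by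
  exact stmt11' l hl T hT hcrit v hv huniq
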